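/- With O_{1,m} as above, Tr(O_{1,m} Y_{1,m} O_{1,m}ᵀ Y_{1,m}) = 2 ⟨1|O_{1,m}|1⟩ · ⟨m|O_{1,m}|m⟩ = 2 ∏_{n=m+1}^{d} cos(λ_{1,n}). -/

import Mathlib

open Matrix Complex

/-- `Y m n = -i |m⟩⟨n| + i |n⟩⟨m|`. -/
noncomputable def Ymat {d : ℕ} (m n : Fin d) : Matrix (Fin d) (Fin d) ℂ :=
  (-Complex.I) • Matrix.single m n 1 + Complex.I • Matrix.single n m 1

/-- `O_{1,m} = ∏_{n > m} exp(i Y_{1,n} λ_{1,n})`, product taken in increasing order of `n`;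
the index `⟨0, hd⟩ : Fin d` plays the role of the basis vector `|1⟩`. -/
noncomputable def O1m {d : ℕ} (hd : 0 < d) (lam : Fin d → ℝ) (m : Fin d) :
    Matrix (Fin d) (Fin d) ℂ :=
  (((List.finRange d).filter (fun n => m < n)).map
    (fun n => NormedSpace.exp ((Complex.I * (lam n : ℂ)) • Ymat ⟨0, hd⟩ n))).prod

open scoped Nat

namespace TrAux

variable {d : ℕ}

noncomputable def E (a b : Fin d) : Matrix (Fin d) (Fin d) ℂ := Matrix.single a b 1

noncomputable def Bm (z n : Fin d) : Matrix (Fin d) (Fin d) ℂ := E z n - E n z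
noncomputable def Pm (z n : Fin d) : Matrix (Fin d) (Fin d) ℂ := E z z + E n n

lemma EE_same (a b c : Fin d) : E a b * E b c = E (d := d) a c := by
  unfold E; rw [Matrix.single_mul_single_same, one_mul]

lemma EE_ne (a : Fin d) {b c : Fin d} (e : Fin d) (h : b ≠ c) : E a b * E c e = 0 :=
  Matrix.single_mul_single_of_ne (c := (1 : ℂ)) (i := a) (j := b) (k := c) (h := h) (d := 1)

lemma B_mul_B {z n : Fin d} (h : z ≠ n) : Bm z n * Bm z n = -Pm z n := by
  simp only [Bm, Pm, sub_mul, mul_sub, EE_same, EE_ne _ _ h, EE_ne _ _ h.symm]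
  abel

lemma P_mul_B {z n : Fin d} (h : z ≠ n) : Pm z n * Bm z n = Bm z n := by
  simp only [Bm, Pm, add_mul, mul_sub, EE_same, EE_ne _ _ h, EE_ne _ _ h.symm]
  abel

lemma coe_smul_mat (r : ℝ) (M : Matrix (Fin d) (Fin d) ℂ) : (r : ℂ) • M = r • M := by
  ext i j
  simp [Complex.real_smul]

noncomputable def phi (z n : Fin d) : ℂ →ₗ[ℝ] Matrix (Fin d) (Fin d) ℂ :=
  Complex.reLm.smulRight (Pm z n) + Complex.imLm.smulRight (Bm z n)

lemma phi_apply (z n : Fin d) (w : ℂ) : phi z n w = w.re • Pm z n + w.im • Bm z n := rfl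

lemma phi_mul_I {z n : Fin d} (h : z ≠ n) (w : ℂ) :
    phi z n (w * Complex.I) = phi z n w * Bm z n := by
  simp only [phi_apply, Complex.mul_I_re, Complex.mul_I_im, add_mul, smul_mul_assoc,
    P_mul_B h, B_mul_B h]
  rw [neg_smul, smul_neg]
  abel

lemma phi_real_mul (z n : Fin d) (r : ℝ) (w : ℂ) :
    phi z n ((r : ℂ) * w) = r • phi z n w := by
  rw [← Complex.real_smul]; exact (phi z n).map_smul r w

lemma phi_pow {z n : Fin d} (h : z ≠ n) (t : ℝ) (k : ℕ) :
    phi z n (((t : ℂ) * Complex.I) ^ (k + 1)) = ((t : ℂ) • Bm z n) ^ (k + 1) := by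
  induction k with
  | zero =>
    rw [pow_one, pow_one, phi_mul_I h, phi_apply]
    simp only [Complex.ofReal_re, Complex.ofReal_im, zero_smul, add_zero, smul_mul_assoc,
      P_mul_B h, coe_smul_mat]
  | succ k ih =>
    have h1 : ((t:ℂ)*Complex.I)^(k+1+1) = ((t:ℂ) * (((t:ℂ)*Complex.I)^(k+1))) * Complex.I := by
      ring
    have h2 : ((t:ℂ) • Bm z n)^(k+1+1) = (t:ℂ) • (((t:ℂ) • Bm z n)^(k+1) * Bm z n) := by
      rw [pow_succ, mul_smul_comm]
    rw [h1, phi_mul_I h, phi_real_mul, ih, h2, smul_mul_assoc]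
    simp [coe_smul_mat]


lemma exp_rot {z n : Fin d} (h : z ≠ n) (t : ℝ) :
    NormedSpace.exp ((t : ℂ) • Bm z n) =
      1 + ((Real.cos t : ℂ) - 1) • Pm z n + (Real.sin t : ℂ) • Bm z n := by
  letI : SeminormedRing (Matrix (Fin d) (Fin d) ℂ) := Matrix.linftyOpSemiNormedRing
  letI : NormedRing (Matrix (Fin d) (Fin d) ℂ) := Matrix.linftyOpNormedRing
  letI : NormedAlgebra ℂ (Matrix (Fin d) (Fin d) ℂ) := Matrix.linftyOpNormedAlgebra
  set x : ℂ := (t : ℂ) * Complex.I with hx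
  have hsum : Summable fun k : ℕ => (k ! : ℂ)⁻¹ • x ^ k :=
    NormedSpace.expSeries_summable' (𝕂 := ℂ) x
  let Φ : ℂ →L[ℝ] Matrix (Fin d) (Fin d) ℂ := LinearMap.toContinuousLinearMap (phi z n)
  have hΦg : Summable fun k : ℕ => Φ ((k ! : ℂ)⁻¹ • x ^ k) := hsum.map Φ Φ.continuous
  have hind : Summable fun k : ℕ =>
      (if k = 0 then (1 : Matrix (Fin d) (Fin d) ℂ) - Pm z n else 0) :=
    summable_of_ne_finset_zero (s := {0}) (by intro b hb; simp at hb; simp [hb])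
  have hΦx : ∀ w : ℂ, Φ w = w.re • Pm z n + w.im • Bm z n := fun w => rfl
  have hfk : ∀ k : ℕ, (k ! : ℂ)⁻¹ • ((t : ℂ) • Bm z n) ^ k
      = Φ ((k ! : ℂ)⁻¹ • x ^ k)
        + (if k = 0 then (1 : Matrix (Fin d) (Fin d) ℂ) - Pm z n else 0) := by
    intro k
    cases k with
    | zero =>
      simp [hΦx, Pm]
    | succ k =>
      have h1 : (((k+1)! : ℂ))⁻¹ • x ^ (k+1) = (((k+1)! : ℝ))⁻¹ • x ^ (k+1) := by
        simp only [smul_eq_mul, Complex.real_smul]; push_cast; ring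
      rw [if_neg (Nat.succ_ne_zero k), add_zero, h1, Φ.map_smul]
      have h2 : Φ (x ^ (k+1)) = ((t : ℂ) • Bm z n) ^ (k+1) := phi_pow h t k
      rw [h2, ← coe_smul_mat]
      push_cast
      ring_nf
  rw [NormedSpace.exp_eq_tsum ℂ]
  calc (∑' k : ℕ, (k ! : ℂ)⁻¹ • ((t : ℂ) • Bm z n) ^ k)
      = ∑' k : ℕ, (Φ ((k ! : ℂ)⁻¹ • x ^ k)
          + (if k = 0 then (1 : Matrix (Fin d) (Fin d) ℂ) - Pm z n else 0)) := by
        exact tsum_congr hfk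
    _ = Φ (∑' k : ℕ, (k ! : ℂ)⁻¹ • x ^ k) + ((1 : Matrix (Fin d) (Fin d) ℂ) - Pm z n) := by
        rw [Summable.tsum_add hΦg hind, tsum_ite_eq, Φ.map_tsum hsum]
    _ = _ := by
        have hexp : (∑' k : ℕ, (k ! : ℂ)⁻¹ • x ^ k) = Complex.exp x := by
          rw [Complex.exp_eq_exp_ℂ, NormedSpace.exp_eq_tsum ℂ]
        rw [hexp, hx, Complex.exp_mul_I, ← Complex.ofReal_cos, ← Complex.ofReal_sin, hΦx]
        simp only [Complex.add_re, Complex.ofReal_re, Complex.mul_re, Complex.I_re,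
          Complex.I_im, Complex.ofReal_im, Complex.add_im, Complex.mul_im]
        rw [← coe_smul_mat, ← coe_smul_mat, sub_smul, one_smul]
        push_cast
        ring_nf
        abel

lemma smul_Ymat (z n : Fin d) (t : ℝ) :
    (Complex.I * (t : ℂ)) • Ymat z n = (t : ℂ) • Bm z n := by
  have h1 : Complex.I * (t : ℂ) * -Complex.I = (t : ℂ) := by
    ring_nf; simp [Complex.I_sq]
  have h2 : Complex.I * (t : ℂ) * Complex.I = -(t : ℂ) := by
    ring_nf; simp [Complex.I_sq]
  rw [Ymat, Bm, smul_add, smul_smul, smul_smul, smul_sub, h1, h2, neg_smul]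
  show (t:ℂ) • E z n + -((t:ℂ) • E n z) = _
  abel

lemma factor_eq {z n : Fin d} (h : z ≠ n) (t : ℝ) :
    NormedSpace.exp ((Complex.I * (t : ℂ)) • Ymat z n) =
      1 + ((Real.cos t : ℂ) - 1) • Pm z n + (Real.sin t : ℂ) • Bm z n := by
  rw [smul_Ymat, exp_rot h]

lemma step {z n : Fin d} (h : z ≠ n) (t : ℝ) (Q : Matrix (Fin d) (Fin d) ℂ) :
    (∀ k b, k ≠ z → k ≠ n →
        (NormedSpace.exp ((Complex.I * (t : ℂ)) • Ymat z n) * Q) k b = Q k b) ∧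
    (∀ b, (NormedSpace.exp ((Complex.I * (t : ℂ)) • Ymat z n) * Q) z b
        = (Real.cos t : ℂ) * Q z b + (Real.sin t : ℂ) * Q n b) ∧
    (∀ b, (NormedSpace.exp ((Complex.I * (t : ℂ)) • Ymat z n) * Q) n b
        = (Real.cos t : ℂ) * Q n b - (Real.sin t : ℂ) * Q z b) := by
  rw [factor_eq h t]
  have hexp : (1 + ((Real.cos t : ℂ) - 1) • Pm z n + (Real.sin t : ℂ) • Bm z n) * Q
      = Q + ((Real.cos t : ℂ) - 1) • (E z z * Q) + ((Real.cos t : ℂ) - 1) • (E n n * Q)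
        + (Real.sin t : ℂ) • (E z n * Q) - (Real.sin t : ℂ) • (E n z * Q) := by
    rw [Pm, Bm]
    simp only [add_mul, sub_mul, smul_mul_assoc, one_mul, smul_add, smul_sub]
    abel
  refine ⟨?_, ?_, ?_⟩
  · intro k b hk1 hk2
    rw [hexp]
    simp [Matrix.add_apply, Matrix.sub_apply, Matrix.smul_apply, E, hk1, hk2]
  · intro b
    rw [hexp]
    simp [Matrix.add_apply, Matrix.sub_apply, Matrix.smul_apply, E, h, h.symm]
    ring
  · intro b
    rw [hexp]
    simp [Matrix.add_apply, Matrix.sub_apply, Matrix.smul_apply, E, h, h.symm]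
    ring

noncomputable def prodL (lam : Fin d → ℝ) (z : Fin d) (l : List (Fin d)) :
    Matrix (Fin d) (Fin d) ℂ :=
  (l.map (fun n => NormedSpace.exp ((Complex.I * (lam n : ℂ)) • Ymat z n))).prod

lemma prodL_nil (lam : Fin d → ℝ) (z : Fin d) : prodL lam z [] = 1 := rfl

lemma prodL_cons (lam : Fin d → ℝ) (z n : Fin d) (l : List (Fin d)) :
    prodL lam z (n :: l) =
      NormedSpace.exp ((Complex.I * (lam n : ℂ)) • Ymat z n) * prodL lam z l := by
  simp [prodL]

lemma prodL_col (lam : Fin d → ℝ) {z m : Fin d} (hzm : z ≠ m) :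
    ∀ l : List (Fin d), (∀ n ∈ l, n ≠ m ∧ z ≠ n) →
      ∀ j, prodL lam z l j m = (1 : Matrix (Fin d) (Fin d) ℂ) j m := by
  intro l
  induction l with
  | nil => intro _ j; rfl
  | cons n l ih =>
    intro hl j
    obtain ⟨hnm, hzn⟩ := hl n (List.mem_cons_self)
    have ih' := ih (fun k hk => hl k (List.mem_cons_of_mem _ hk))
    rw [prodL_cons]
    obtain ⟨s1, s2, s3⟩ := step hzn (lam n) (prodL lam z l)
    by_cases hj1 : j = z
    · subst hj1
      rw [s2 m, ih' j, ih' n]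
      simp [Matrix.one_apply_ne, hzm, hnm]
    by_cases hj2 : j = n
    · subst hj2
      rw [s3 m, ih' j, ih' z]
      simp [Matrix.one_apply_ne, hzm, hnm]
    · rw [s1 j m hj1 hj2, ih' j]

lemma prodL_row (lam : Fin d → ℝ) {z m : Fin d} (hzm : z ≠ m) :
    ∀ l : List (Fin d), (∀ n ∈ l, n ≠ m ∧ z ≠ n) →
      ∀ j, prodL lam z l m j = (1 : Matrix (Fin d) (Fin d) ℂ) m j := by
  intro l
  induction l with
  | nil => intro _ j; rfl
  | cons n l ih =>
    intro hl j
    obtain ⟨hnm, hzn⟩ := hl n (List.mem_cons_self)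
    have ih' := ih (fun k hk => hl k (List.mem_cons_of_mem _ hk))
    rw [prodL_cons]
    obtain ⟨s1, _, _⟩ := step hzn (lam n) (prodL lam z l)
    rw [s1 m j hzm.symm hnm.symm, ih' j]

lemma prodL_z (lam : Fin d → ℝ) (z : Fin d) :
    ∀ l : List (Fin d), (∀ n ∈ l, z ≠ n) → l.Nodup →
      (∀ k, k ≠ z → k ∉ l → prodL lam z l k z = 0) ∧
      prodL lam z l z z = (l.map fun n => ((Real.cos (lam n) : ℝ) : ℂ)).prod := by
  intro l
  induction l with
  | nil =>
    intro _ _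
    refine ⟨fun k hk _ => Matrix.one_apply_ne hk, ?_⟩
    simp [prodL_nil]
  | cons n l ih =>
    intro hl hnd
    have hzn := hl n (List.mem_cons_self)
    obtain ⟨hn_mem, hnd'⟩ := List.nodup_cons.mp hnd
    obtain ⟨ih1, ih2⟩ := ih (fun k hk => hl k (List.mem_cons_of_mem _ hk)) hnd'
    obtain ⟨s1, s2, s3⟩ := step hzn (lam n) (prodL lam z l)
    constructor
    · intro k hk hkl
      have hkn : k ≠ n := fun hkn => hkl (hkn ▸ List.mem_cons_self)
      rw [prodL_cons, s1 k z hk hkn]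
      exact ih1 k hk (fun hh => hkl (List.mem_cons_of_mem _ hh))
    · rw [prodL_cons, s2 z, ih2, ih1 n hzn.symm hn_mem, mul_zero, add_zero,
        List.map_cons, List.prod_cons]

lemma trace_mul_E (M : Matrix (Fin d) (Fin d) ℂ) (a b : Fin d) :
    (M * E a b).trace = M b a := by
  rw [Matrix.trace]
  rw [Finset.sum_eq_single b]
  · rw [Matrix.diag_apply, E, Matrix.mul_single_apply_same, mul_one]
  · intro c _ hc
    simp [Matrix.diag_apply, E, hc]
  · intro hb; exact absurd (Finset.mem_univ b) hb

lemma mul_E_mul (M N : Matrix (Fin d) (Fin d) ℂ) (a b i j : Fin d) :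
    (M * E a b * N) i j = M i a * N b j := by
  rw [Matrix.mul_apply]
  rw [Finset.sum_eq_single b]
  · rw [E, Matrix.mul_single_apply_same, mul_one]
  · intro c _ hc
    simp [E, hc]
  · intro hb; exact absurd (Finset.mem_univ b) hb

lemma trace_formula {z m : Fin d} (h : z ≠ m) (A : Matrix (Fin d) (Fin d) ℂ) :
    (A * Ymat z m * Aᵀ * Ymat z m).trace
      = 2 * (A z z * A m m) - 2 * (A z m * A m z) := by
  have hY : Ymat z m = (-Complex.I) • E z m + Complex.I • E m z := rfl
  have hW : ∀ i j : Fin d, (A * Ymat z m * Aᵀ) i j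
      = -Complex.I * (A i z * A j m) + Complex.I * (A i m * A j z) := by
    intro i j
    rw [hY]
    simp only [Matrix.mul_add, Matrix.add_mul, Matrix.mul_smul, Matrix.smul_mul,
      Matrix.neg_mul, Matrix.mul_neg, neg_smul,
      Matrix.add_apply, Matrix.smul_apply, Matrix.neg_apply, mul_E_mul,
      Matrix.transpose_apply, smul_eq_mul, neg_mul]
  have hT : (A * Ymat z m * Aᵀ * Ymat z m).trace
      = -Complex.I * ((A * Ymat z m * Aᵀ) m z) + Complex.I * ((A * Ymat z m * Aᵀ) z m) := by
    nth_rewrite 2 [hY]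
    rw [Matrix.mul_add, Matrix.mul_smul, Matrix.mul_smul, Matrix.trace_add,
      Matrix.trace_smul, Matrix.trace_smul, trace_mul_E, trace_mul_E]
    simp [smul_eq_mul]
  rw [hT, hW, hW]
  linear_combination (A m z * A z m + A z m * A m z - 2 * A m m * A z z) * Complex.I_sq

end TrAux

/-- `Tr(O_{1,m} Y_{1,m} O_{1,m}ᵀ Y_{1,m}) = 2⟨1|O_{1,m}|1⟩⟨m|O_{1,m}|m⟩ = 2 ∏_{n>m} cos λ_{1,n}`. -/
theorem trace_O1m_Y_O1mT_Y {d : ℕ} (hd : 0 < d) (lam : Fin d → ℝ)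
    (m : Fin d) (hm : 0 < (m : ℕ)) :
    (O1m hd lam m * Ymat ⟨0, hd⟩ m * (O1m hd lam m)ᵀ * Ymat ⟨0, hd⟩ m).trace =
        2 * (O1m hd lam m ⟨0, hd⟩ ⟨0, hd⟩) * (O1m hd lam m m m) ∧
    (O1m hd lam m * Ymat ⟨0, hd⟩ m * (O1m hd lam m)ᵀ * Ymat ⟨0, hd⟩ m).trace =
        2 * ∏ n ∈ Finset.univ.filter (fun n : Fin d => m < n), ((Real.cos (lam n) : ℝ) : ℂ) := by
  classical
  set z : Fin d := ⟨0, hd⟩ with hzdef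
  set l : List (Fin d) := (List.finRange d).filter (fun n => m < n) with hldef
  have hO : O1m hd lam m = TrAux.prodL lam z l := rfl
  have hzval : (z : ℕ) = 0 := rfl
  have hzm : z ≠ m := Fin.ne_of_val_ne (by omega)
  have hmem : ∀ n ∈ l, m < n := by
    intro n hn
    have := List.mem_filter.mp hn
    exact of_decide_eq_true this.2
  have hl1 : ∀ n ∈ l, n ≠ m ∧ z ≠ n := by
    intro n hn
    have h1 : (m : ℕ) < (n : ℕ) := hmem n hn
    exact ⟨ne_of_gt (hmem n hn), Fin.ne_of_val_ne (by omega)⟩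
  have hnd : l.Nodup := (List.nodup_finRange d).filter _
  have hcol := TrAux.prodL_col lam hzm l hl1
  have hrow := TrAux.prodL_row lam hzm l hl1
  obtain ⟨hz1, hz2⟩ := TrAux.prodL_z lam z l (fun n hn => (hl1 n hn).2) hnd
  have hOzm : O1m hd lam m z m = 0 := by
    rw [hO, hcol z, Matrix.one_apply_ne hzm]
  have hOmz : O1m hd lam m m z = 0 := by
    rw [hO, hrow z, Matrix.one_apply_ne hzm.symm]
  have hOmm : O1m hd lam m m m = 1 := by
    rw [hO, hcol m, Matrix.one_apply_eq]
  have htr := TrAux.trace_formula hzm (O1m hd lam m)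
  have hprod : (l.map fun n => ((Real.cos (lam n) : ℝ) : ℂ)).prod
      = ∏ n ∈ Finset.univ.filter (fun n : Fin d => m < n), ((Real.cos (lam n) : ℝ) : ℂ) := by
    rw [← List.prod_toFinset _ hnd]
    congr 1
    rw [hldef, List.toFinset_filter, List.toFinset_finRange]
    simp
  constructor
  · rw [htr, hOzm, hOmz]
    ring
  · rw [htr, hOzm, hOmz, hOmm, hO, hz2, hprod]
    ring
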